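/- Let 𝓜 ⊆ O^{rk} be an R-submodule with K·𝓜 = K^{rk}. Given scalars c_i^j ∈ k for all pairs j > i, set ε̂_i = ε_i + Σ_{j>i} c_i^j ε_j (a lower-triangular unipotent substitution) and let 𝓜̂ = {Σ_i (y, ε_i)·ε̂_i : y ∈ 𝓜}, where (y, ε_i) denotes the i-th coordinate of y in the standard basis. Then Δ^{(i)}(𝓜̂) = Δ^{(i)}(𝓜) for every 0 ≤ i ≤ rk−1. -/

import Mathlib

open PowerSeries

/-- `ν f = n` : the order of the power series `f` equals `n`. -/
def HasOrd {k : Type*} [Semiring k] (f : PowerSeries k) (n : ℕ) : Prop :=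
  PowerSeries.coeff n f ≠ 0 ∧ ∀ m < n, PowerSeries.coeff m f = 0

/-- `υ(y) = v` for the cumulative valuation determined by `υ(ε_i) = υ i`:
`v` is the minimum over `i` of `ν(y_i) + υ_i`. -/
def CumOrd {k : Type*} [Semiring k] {rk : ℕ} (υ : Fin rk → ℝ)
    (y : Fin rk → PowerSeries k) (v : ℝ) : Prop :=
  (∃ (i : Fin rk) (n : ℕ), HasOrd (y i) n ∧ (n : ℝ) + υ i = v) ∧
  (∀ (i : Fin rk) (n : ℕ), HasOrd (y i) n → v ≤ (n : ℝ) + υ i)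

/-- The `i`-th component `Δ^{(i)}(S) = {a ∈ ℕ | a + υ_i ∈ υ(S \ {0})}`. -/
def DeltaComp {k : Type*} [Semiring k] {rk : ℕ} (υ : Fin rk → ℝ)
    (S : Set (Fin rk → PowerSeries k)) (i : Fin rk) : Set ℕ :=
  {a | ∃ y ∈ S, CumOrd υ y ((a : ℝ) + υ i)}

/-- Valuation parameters `0 ≤ υ_0 < υ_1 < … < υ_{rk-1} < 1`. -/
def ValidVal {rk : ℕ} (υ : Fin rk → ℝ) : Prop :=
  (∀ i, 0 ≤ υ i ∧ υ i < 1) ∧ StrictMono υ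

section Helpers

variable {k : Type*} [Semiring k]

private noncomputable def ordN (f : PowerSeries k) : ℕ := by
  classical
  exact if h : ∃ n, PowerSeries.coeff n f ≠ 0 then Nat.find h else 0

private lemma hasOrd_ordN {f : PowerSeries k} (hf : f ≠ 0) : HasOrd f (ordN f) := by
  classical
  have h : ∃ n, PowerSeries.coeff n f ≠ 0 := by
    by_contra hc
    push_neg at hc
    exact hf (PowerSeries.ext fun n => hc n)
  rw [ordN]
  rw [dif_pos h]
  exact ⟨Nat.find_spec h, fun m hm => not_not.mp (Nat.find_min h hm)⟩

private lemma hasOrd_unique {f : PowerSeries k} {n m : ℕ}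
    (hn : HasOrd f n) (hm : HasOrd f m) : n = m := by
  rcases lt_trichotomy n m with h | h | h
  · exact absurd (hm.2 n h) hn.1
  · exact h
  · exact absurd (hn.2 m h) hm.1

private lemma cumOrd_coeff {rk : ℕ} {υ : Fin rk → ℝ}
    {y : Fin rk → PowerSeries k} {v : ℝ} (h : CumOrd υ y v) (i : Fin rk) (n : ℕ)
    (hn : PowerSeries.coeff n (y i) ≠ 0) : v ≤ (n : ℝ) + υ i := by
  have hne : y i ≠ 0 := fun h0 => hn (by simp [h0])
  have hord := hasOrd_ordN hne
  have hle : ordN (y i) ≤ n := by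
    by_contra hc
    exact hn (hord.2 n (lt_of_not_ge hc))
  have := h.2 i _ hord
  have : v ≤ (ordN (y i) : ℝ) + υ i := this
  calc v ≤ (ordN (y i) : ℝ) + υ i := this
    _ ≤ (n : ℝ) + υ i := by
        have : (ordN (y i) : ℝ) ≤ (n : ℝ) := by exact_mod_cast hle
        linarith

private lemma cumOrd_unique {rk : ℕ} {υ : Fin rk → ℝ}
    {y : Fin rk → PowerSeries k} {v w : ℝ}
    (h1 : CumOrd υ y v) (h2 : CumOrd υ y w) : v = w := by
  obtain ⟨i, n, hn, hv⟩ := h1.1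
  obtain ⟨j, p, hp, hw⟩ := h2.1
  have A := h1.2 j p hp
  have B := h2.2 i n hn
  linarith

private lemma cumOrd_exists {rk : ℕ} (υ : Fin rk → ℝ)
    {y : Fin rk → PowerSeries k} (hy : ∃ j, y j ≠ 0) : ∃ v, CumOrd υ y v := by
  classical
  set s : Finset (Fin rk) := Finset.univ.filter (fun i => y i ≠ 0) with hs
  obtain ⟨j0, hj0⟩ := hy
  have hsne : s.Nonempty := ⟨j0, by simp [hs, hj0]⟩
  obtain ⟨i0, hi0s, hi0min⟩ := s.exists_min_image (fun i => (ordN (y i) : ℝ) + υ i) hsne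
  have hi0ne : y i0 ≠ 0 := by simpa [hs] using hi0s
  refine ⟨(ordN (y i0) : ℝ) + υ i0, ⟨i0, ordN (y i0), hasOrd_ordN hi0ne, rfl⟩, ?_⟩
  intro i n hn
  have hine : y i ≠ 0 := fun h0 => hn.1 (by simp [h0])
  have : n = ordN (y i) := hasOrd_unique hn (hasOrd_ordN hine)
  rw [this]
  exact hi0min i (by simp [hs, hine])

end Helpers

section Sub

variable {k : Type*} [Field k]

private lemma coeff_T {rk : ℕ} (c : Fin rk → Fin rk → k)
    (y : Fin rk → PowerSeries k) (j : Fin rk) (n : ℕ) :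
    PowerSeries.coeff n (y j + ∑ i' : Fin rk, if i' < j then c i' j • y i' else 0)
      = PowerSeries.coeff n (y j)
        + ∑ i' : Fin rk, if i' < j then c i' j * PowerSeries.coeff n (y i') else 0 := by
  rw [map_add, map_sum]
  congr 1
  refine Finset.sum_congr rfl fun i' _ => ?_
  split_ifs with h
  · rw [PowerSeries.coeff_smul, smul_eq_mul]
  · simp

private lemma cumOrd_sub {rk : ℕ} {υ : Fin rk → ℝ}
    (hυ : ValidVal υ) (c : Fin rk → Fin rk → k)
    {y : Fin rk → PowerSeries k} {v : ℝ} (h : CumOrd υ y v) :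
    CumOrd υ (fun j : Fin rk => y j + ∑ i' : Fin rk, if i' < j then c i' j • y i' else 0) v := by
  constructor
  · -- existence of a witness
    obtain ⟨i0, n0, hord, heq⟩ := h.1
    refine ⟨i0, n0, ⟨?_, ?_⟩, heq⟩
    · -- coeff n0 nonzero
      rw [coeff_T]
      have hzero : ∀ i' : Fin rk, i' < i0 → PowerSeries.coeff n0 (y i') = 0 := by
        intro i' hi'
        by_contra hc
        have h1 := cumOrd_coeff h i' n0 hc
        have h2 : υ i' < υ i0 := hυ.2 hi'
        linarith
      have : (∑ i' : Fin rk, if i' < i0 then c i' i0 * PowerSeries.coeff n0 (y i') else 0) = 0 := by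
        refine Finset.sum_eq_zero fun i' _ => ?_
        split_ifs with hlt
        · rw [hzero i' hlt, mul_zero]
        · rfl
      rw [this, add_zero]
      exact hord.1
    · -- coeffs below n0 vanish
      intro p hp
      rw [coeff_T]
      have hzero : ∀ i' : Fin rk, i' ≤ i0 → PowerSeries.coeff p (y i') = 0 := by
        intro i' hi'
        by_contra hc
        have h1 := cumOrd_coeff h i' p hc
        have h2 : υ i' ≤ υ i0 := hυ.2.monotone hi'
        have h3 : (p : ℝ) < (n0 : ℝ) := by exact_mod_cast hp
        linarith
      rw [hzero i0 le_rfl, zero_add]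
      refine Finset.sum_eq_zero fun i' _ => ?_
      split_ifs with hlt
      · rw [hzero i' hlt.le, mul_zero]
      · rfl
  · -- lower bound
    intro j n hn
    by_contra hc
    push_neg at hc
    have hzero : ∀ i' : Fin rk, i' ≤ j → PowerSeries.coeff n (y i') = 0 := by
      intro i' hi'
      by_contra hcc
      have h1 := cumOrd_coeff h i' n hcc
      have h2 : υ i' ≤ υ j := hυ.2.monotone hi'
      linarith
    apply hn.1
    rw [coeff_T, hzero j le_rfl, zero_add]
    refine Finset.sum_eq_zero fun i' _ => ?_
    split_ifs with hlt
    · rw [hzero i' hlt.le, mul_zero]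
    · rfl

end Sub

/-- Let `𝓜 ⊆ O^{rk}` be an `R`-submodule with `K·𝓜 = K^{rk}`.
Lower-triangular unipotent substitutions `ε̂_i = ε_i + Σ_{j>i} c_i^j ε_j` do not change the
components: `Δ^{(i)}(𝓜̂) = Δ^{(i)}(𝓜)` for all `i`, where
`𝓜̂ = {Σ_i (y,ε_i)·ε̂_i | y ∈ 𝓜}`. -/
theorem lower_triangular_substitution_preserves_components
    {k : Type*} [Field k]
    (R : Subalgebra k (PowerSeries k)) (m : ℕ) (hm : 1 ≤ m)
    (hRm : ∀ f : PowerSeries k, PowerSeries.X ^ m * f ∈ R)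
    (rk : ℕ) (hrk : 1 ≤ rk)
    (υ : Fin rk → ℝ) (hυ : ValidVal υ)
    (𝓜 : Submodule k (Fin rk → PowerSeries k))
    (hstab : ∀ r ∈ R, ∀ y ∈ 𝓜, (fun i => r * y i) ∈ 𝓜)
    (hfull : Submodule.span (LaurentSeries k)
        ((fun y : Fin rk → PowerSeries k => fun i : Fin rk =>
            (HahnSeries.ofPowerSeries ℤ k) (y i)) ''
          (𝓜 : Set (Fin rk → PowerSeries k))) = ⊤)
    (c : Fin rk → Fin rk → k) :
    ∀ i : Fin rk,
      DeltaComp υ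
        ((fun y : Fin rk → PowerSeries k => fun j : Fin rk =>
            y j + ∑ i' : Fin rk, if i' < j then c i' j • y i' else 0) ''
          (𝓜 : Set (Fin rk → PowerSeries k))) i
      = DeltaComp υ (𝓜 : Set (Fin rk → PowerSeries k)) i := by
  intro i
  ext a
  simp only [DeltaComp, Set.mem_setOf_eq, Set.mem_image]
  constructor
  · rintro ⟨yh, ⟨y, hy, rfl⟩, hc⟩
    refine ⟨y, hy, ?_⟩
    have hyne : ∃ j, y j ≠ 0 := by
      by_contra hcon
      push_neg at hcon
      obtain ⟨j, n, hord, _⟩ := hc.1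
      apply hord.1
      simp [hcon]
    obtain ⟨v0, hv0⟩ := cumOrd_exists υ hyne
    have := cumOrd_sub hυ c hv0
    have hveq : v0 = (a : ℝ) + υ i := cumOrd_unique this hc
    rwa [hveq] at hv0
  · rintro ⟨y, hy, hc⟩
    exact ⟨_, ⟨y, hy, rfl⟩, cumOrd_sub hυ c hc⟩
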